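/- For every Hurst parameter H ∈ (0,1/2), the fOU correlation function 𝒞_Z is absolutely integrable on (0,∞): ∫₀^∞ |𝒞_Z(s)| ds < ∞. -/

import Mathlib

open MeasureTheory Real Set


noncomputable def Kc (p b : ℝ) : ℝ := ∫ v : ℝ, Real.exp (-(b * |v|)) * |v| ^ p


lemma my_rpow_add_le {p x y : ℝ} (hx : 0 ≤ x) (hy : 0 ≤ y) (hp0 : 0 ≤ p) (hp1 : p ≤ 1) :
    (x + y) ^ p ≤ x ^ p + y ^ p := by
  have h := NNReal.rpow_add_le_add_rpow x.toNNReal y.toNNReal hp0 hp1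
  have h2 := NNReal.coe_le_coe.2 h
  push_cast [← Real.toNNReal_add hx hy] at h2
  rwa [Real.coe_toNNReal _ (by positivity), Real.coe_toNNReal _ hx, Real.coe_toNNReal _ hy] at h2

lemma my_rpow_sub_abs_le {p : ℝ} (hp0 : 0 ≤ p) (hp1 : p ≤ 1) {x y : ℝ} (hx : 0 ≤ x) (hy : 0 ≤ y) :
    |x ^ p - y ^ p| ≤ |x - y| ^ p := by
  have key : ∀ a b : ℝ, 0 ≤ a → a ≤ b → b ^ p - a ^ p ≤ (b - a) ^ p := by
    intro a b ha hab
    have h1 : b ^ p ≤ a ^ p + (b - a) ^ p := by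
      have := my_rpow_add_le ha (by linarith : (0:ℝ) ≤ b - a) hp0 hp1
      simpa using this
    linarith
  rcases le_total y x with h | h
  · rw [abs_of_nonneg (by linarith : (0:ℝ) ≤ x - y),
      abs_of_nonneg (sub_nonneg.2 (Real.rpow_le_rpow hy h hp0))]
    exact key y x hy h
  · rw [abs_of_nonpos (by linarith : x - y ≤ 0),
      abs_of_nonpos (sub_nonpos.2 (Real.rpow_le_rpow hx h hp0)), neg_sub, neg_sub]
    exact key x y hx h

lemma my_rpow_lip {q c : ℝ} (hc : 0 < c) (hq : q < 1) {u t : ℝ} (hu : c ≤ u) (ht : c ≤ t) :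
    |t ^ q - u ^ q| ≤ |q| * c ^ (q - 1) * |t - u| := by
  have h := Convex.norm_image_sub_le_of_norm_hasDerivWithin_le
    (f := fun x : ℝ => x ^ q) (f' := fun x : ℝ => q * x ^ (q - 1)) (s := Ici c)
    (C := |q| * c ^ (q - 1))
    (fun x hx => (Real.hasDerivAt_rpow_const (Or.inl (ne_of_gt (lt_of_lt_of_le hc hx)))).hasDerivWithinAt)
    (fun x hx => by
      have hx0 : (0:ℝ) < x := lt_of_lt_of_le hc hx
      rw [Real.norm_eq_abs, abs_mul, abs_of_nonneg (Real.rpow_nonneg hx0.le _)]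
      exact mul_le_mul_of_nonneg_left
        (Real.rpow_le_rpow_of_nonpos hc hx (by linarith)) (abs_nonneg q))
    (convex_Ici c) hu ht
  simpa [Real.norm_eq_abs] using h

lemma abs_sub_le_of_uIcc {s x t : ℝ} (ht : t ∈ Set.uIcc s x) : |t - s| ≤ |x - s| := by
  rcases Set.mem_uIcc.1 ht with ⟨h1, h2⟩ | ⟨h1, h2⟩ <;> rw [abs_sub_le_iff] <;>
    constructor <;> cases' abs_cases (x - s) with h h <;> linarith [h.1, h.2]

lemma my_taylor {p c s x : ℝ} (hp0 : 0 < p) (hp1 : p < 1) (hc : 0 < c)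
    (hcs : c ≤ s) (hcx : c ≤ x) :
    |x ^ p - s ^ p - p * s ^ (p - 1) * (x - s)| ≤ p * (1 - p) * c ^ (p - 2) * (x - s) ^ 2 := by
  have hsub : Set.uIcc s x ⊆ Set.Ici c := by
    intro t ht
    rcases Set.mem_uIcc.1 ht with ⟨h1, _⟩ | ⟨_, h2⟩ <;> simp only [Set.mem_Ici] <;> linarith
  have h := Convex.norm_image_sub_le_of_norm_hasDerivWithin_le
    (f := fun t : ℝ => t ^ p - p * s ^ (p - 1) * t)
    (f' := fun t : ℝ => p * t ^ (p - 1) - p * s ^ (p - 1))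
    (s := Set.uIcc s x)
    (C := p * (1 - p) * c ^ (p - 2) * |x - s|)
    (fun t ht => by
      have htc : c ≤ t := hsub ht
      exact ((Real.hasDerivAt_rpow_const (Or.inl (ne_of_gt (lt_of_lt_of_le hc htc)))).sub
        ((hasDerivAt_id t).const_mul (p * s ^ (p - 1)))).hasDerivWithinAt.congr_deriv (by ring))
    (fun t ht => by
      have htc : c ≤ t := hsub ht
      show ‖p * t ^ (p - 1) - p * s ^ (p - 1)‖ ≤ _
      rw [Real.norm_eq_abs, ← mul_sub, abs_mul, abs_of_nonneg hp0.le]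
      have h1 : |t ^ (p - 1) - s ^ (p - 1)| ≤ |p - 1| * c ^ ((p - 1) - 1) * |t - s| :=
        my_rpow_lip hc (by linarith) hcs htc
      have h2 : |p - 1| = 1 - p := by rw [abs_of_nonpos (by linarith)]; ring
      have h3 : ((p : ℝ) - 1) - 1 = p - 2 := by ring
      rw [h2, h3] at h1
      calc p * |t ^ (p - 1) - s ^ (p - 1)| ≤ p * ((1 - p) * c ^ (p - 2) * |t - s|) :=
            mul_le_mul_of_nonneg_left h1 hp0.le
        _ ≤ p * ((1 - p) * c ^ (p - 2) * |x - s|) := by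
            have := abs_sub_le_of_uIcc ht
            have hcp : (0:ℝ) ≤ c ^ (p - 2) := Real.rpow_nonneg hc.le _
            exact mul_le_mul_of_nonneg_left
              (mul_le_mul_of_nonneg_left this
                (mul_nonneg (by linarith : (0:ℝ) ≤ 1 - p) hcp)) hp0.le
        _ = p * (1 - p) * c ^ (p - 2) * |x - s| := by ring)
    (convex_uIcc s x) Set.left_mem_uIcc Set.right_mem_uIcc
  rw [Real.norm_eq_abs, Real.norm_eq_abs] at h
  calc |x ^ p - s ^ p - p * s ^ (p - 1) * (x - s)|
      = |x ^ p - p * s ^ (p - 1) * x - (s ^ p - p * s ^ (p - 1) * s)| := by ring_nf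
    _ ≤ p * (1 - p) * c ^ (p - 2) * |x - s| * |x - s| := by simpa using h
    _ = p * (1 - p) * c ^ (p - 2) * (x - s) ^ 2 := by
        rw [mul_assoc, abs_mul_abs_self, ← sq]

lemma my_integrable_comp_abs {f : ℝ → ℝ} (hf : IntegrableOn f (Ioi 0)) :
    Integrable fun x : ℝ => f |x| := by
  have h1 : IntegrableOn (fun x : ℝ => f |x|) (Ioi 0) :=
    hf.congr_fun (fun x hx => by rw [abs_of_pos hx]) measurableSet_Ioi |>.congr_fun
      (fun x hx => rfl) measurableSet_Ioi
  have h2 : IntegrableOn (fun x : ℝ => f |x|) (Iic 0) := by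
    rw [← Measure.map_neg_eq_self (volume : Measure ℝ)]
    have m : MeasurableEmbedding fun x : ℝ => -x := (Homeomorph.neg ℝ).measurableEmbedding
    rw [m.integrableOn_map_iff]
    simp_rw [Function.comp_def, abs_neg, neg_preimage, neg_Iic, neg_zero]
    exact Iff.mpr integrableOn_Ici_iff_integrableOn_Ioi h1
  have h3 := h2.union h1
  rwa [Iic_union_Ioi, integrableOn_univ] at h3

lemma my_integrable_exp_rpow {p b : ℝ} (hp : -1 < p) (hb : 0 < b) :
    Integrable fun v : ℝ => Real.exp (-(b * |v|)) * |v| ^ p := by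
  apply my_integrable_comp_abs (f := fun x : ℝ => Real.exp (-(b * x)) * x ^ p)
  have h := integrableOn_rpow_mul_exp_neg_mul_rpow hp zero_lt_one hb
  apply (h.congr_fun (fun x hx => ?_) measurableSet_Ioi)
  simp [Real.rpow_one, mul_comm]

lemma my_integral_exp_abs : (∫ v : ℝ, Real.exp (-|v|)) = 2 := by
  simpa [integral_exp_neg_Ioi_zero, integral_exp_Iic] using integral_comp_abs (f := fun x : ℝ => Real.exp (-x))

lemma my_integrable_exp_abs : Integrable fun v : ℝ => Real.exp (-|v|) := by
  have h := my_integrable_exp_rpow (p := 0) (b := 1) (by norm_num) one_pos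
  simpa using h

lemma my_odd_zero {a : ℝ} (ha : 0 ≤ a) : (∫ v in Icc (-a) a, Real.exp (-|v|) * v) = 0 := by
  rw [integral_Icc_eq_integral_Ioc,
    ← intervalIntegral.integral_of_le (by linarith : -a ≤ a)]
  have h1 : (∫ x in (-a)..a, Real.exp (-|x|) * x)
      = ∫ x in (-a)..a, -(Real.exp (-|(-x)|) * (-x)) := by
    apply intervalIntegral.integral_congr
    intro x _
    simp [abs_neg]
  have h2 : (∫ x in (-a)..a, (fun y => Real.exp (-|y|) * y) (-x))
      = ∫ x in (-a)..a, Real.exp (-|x|) * x := by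
    rw [intervalIntegral.integral_comp_neg (fun y => Real.exp (-|y|) * y)]
    norm_num
  rw [h1, intervalIntegral.integral_neg] at *
  have h3 : (∫ x in (-a)..a, Real.exp (-|(-x)|) * (-x))
      = ∫ x in (-a)..a, (fun y => Real.exp (-|y|) * y) (-x) := by
    apply intervalIntegral.integral_congr; intro x _; simp
  rw [h3, h2] at h1
  linarith

/-- The fOU correlation function
`𝒞_Z(s) = Γ(2H+1)⁻¹ ( (1/2) ∫_ℝ e^{-|v|} |s+v|^{2H} dv − s^{2H} )`. -/
noncomputable def corrZ (H : ℝ) (s : ℝ) : ℝ :=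
  (Real.Gamma (2 * H + 1))⁻¹ *
    ((1/2) * (∫ v : ℝ, Real.exp (-|v|) * |s + v| ^ (2 * H)) - s ^ (2 * H))


lemma my_integrable_exp_abs_rpow {p : ℝ} (hp : -1 < p) :
    Integrable fun v : ℝ => Real.exp (-|v|) * |v| ^ p := by
  simpa using my_integrable_exp_rpow hp one_pos

lemma my_phi_le {p : ℝ} (hp0 : 0 ≤ p) (hp1 : p ≤ 1) {s : ℝ} (hs : 0 ≤ s) (v : ℝ) :
    abs (|s + v| ^ p - s ^ p) ≤ |v| ^ p := by
  calc abs (|s + v| ^ p - s ^ p) ≤ abs (|s + v| - s) ^ p :=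
        my_rpow_sub_abs_le hp0 hp1 (abs_nonneg _) hs
    _ ≤ |v| ^ p := by
        apply Real.rpow_le_rpow (abs_nonneg _) _ hp0
        have h := abs_abs_sub_abs_le_abs_sub (s + v) s
        rw [abs_of_nonneg hs] at h
        simpa using h

lemma my_integrable_f1 {p : ℝ} (hp0 : 0 < p) (hp1 : p < 1) {s : ℝ} (hs : 0 ≤ s) :
    Integrable fun v : ℝ => Real.exp (-|v|) * |s + v| ^ p := by
  apply Integrable.mono'
    ((my_integrable_exp_abs.mul_const (s ^ p)).add (my_integrable_exp_abs_rpow (p := p) (by linarith)))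
  · exact ((Real.continuous_exp.comp continuous_abs.neg).mul
      ((Real.continuous_rpow_const hp0.le).comp
        ((continuous_const.add continuous_id).abs))).aestronglyMeasurable
  · apply Filter.Eventually.of_forall
    intro v
    simp only [Pi.add_apply]
    have he : 0 < Real.exp (-|v|) := Real.exp_pos _
    rw [Real.norm_eq_abs, abs_mul, abs_of_pos he, abs_of_nonneg (Real.rpow_nonneg (abs_nonneg _) _)]
    have h1 : |s + v| ^ p ≤ s ^ p + |v| ^ p := by
      calc |s + v| ^ p ≤ (s + |v|) ^ p := by
            apply Real.rpow_le_rpow (abs_nonneg _) _ hp0.le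
            calc |s + v| ≤ |s| + |v| := abs_add_le s v
              _ = s + |v| := by rw [abs_of_nonneg hs]
        _ ≤ s ^ p + |v| ^ p := my_rpow_add_le hs (abs_nonneg v) hp0.le hp1.le
    calc Real.exp (-|v|) * |s + v| ^ p ≤ Real.exp (-|v|) * (s ^ p + |v| ^ p) :=
          mul_le_mul_of_nonneg_left h1 he.le
      _ = Real.exp (-|v|) * s ^ p + Real.exp (-|v|) * |v| ^ p := by ring

lemma my_integrable_G {p : ℝ} (hp0 : 0 < p) (hp1 : p < 1) {s : ℝ} (hs : 0 ≤ s) :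
    Integrable fun v : ℝ => Real.exp (-|v|) * (|s + v| ^ p - s ^ p) := by
  have h := (my_integrable_f1 hp0 hp1 hs).sub (my_integrable_exp_abs.mul_const (s ^ p))
  apply h.congr
  apply Filter.Eventually.of_forall
  intro v; simp only [Pi.sub_apply]; ring

lemma corrZ_eq {H : ℝ} (hH : H ∈ Set.Ioo (0:ℝ) (1/2)) {s : ℝ} (hs : 0 < s) :
    corrZ H s = (Real.Gamma (2*H+1))⁻¹ *
      ((1/2) * ∫ v : ℝ, Real.exp (-|v|) * (|s + v| ^ (2*H) - s ^ (2*H))) := by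
  obtain ⟨hH1, hH2⟩ := hH
  have hp0 : (0:ℝ) < 2*H := by linarith
  have hp1 : (2*H:ℝ) < 1 := by linarith
  unfold corrZ
  congr 1
  have hsub : (∫ v : ℝ, Real.exp (-|v|) * (|s + v| ^ (2*H) - s ^ (2*H)))
      = (∫ v : ℝ, Real.exp (-|v|) * |s + v| ^ (2*H)) - ∫ v : ℝ, Real.exp (-|v|) * s ^ (2*H) := by
    simp_rw [mul_sub]
    exact integral_sub (my_integrable_f1 hp0 hp1 hs.le) (my_integrable_exp_abs.mul_const _)
  have h2 : (∫ v : ℝ, Real.exp (-|v|) * s ^ (2*H)) = 2 * s ^ (2*H) := by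
    rw [integral_mul_const, my_integral_exp_abs]
  rw [hsub, h2]; ring

lemma corrZ_abs_le_const {H : ℝ} (hH : H ∈ Set.Ioo (0:ℝ) (1/2)) {s : ℝ} (hs : 0 < s) :
    |corrZ H s| ≤ (Real.Gamma (2*H+1))⁻¹ * ((1/2) * Kc (2*H) 1) := by
  obtain ⟨hH1, hH2⟩ := hH
  have hp0 : (0:ℝ) < 2*H := by linarith
  have hp1 : (2*H:ℝ) < 1 := by linarith
  have hΓ : 0 < Real.Gamma (2*H+1) := Real.Gamma_pos_of_pos (by linarith)
  rw [corrZ_eq ⟨hH1, hH2⟩ hs, abs_mul, abs_of_nonneg (inv_nonneg.2 hΓ.le), abs_mul,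
    abs_of_nonneg (by norm_num : (0:ℝ) ≤ (1:ℝ)/2)]
  apply mul_le_mul_of_nonneg_left _ (inv_nonneg.2 hΓ.le)
  apply mul_le_mul_of_nonneg_left _ (by norm_num : (0:ℝ) ≤ (1:ℝ)/2)
  have hK : Kc (2*H) 1 = ∫ v : ℝ, Real.exp (-(1*|v|)) * |v| ^ (2*H) := rfl
  rw [hK, ← Real.norm_eq_abs]
  apply norm_integral_le_of_norm_le (by simpa using my_integrable_exp_abs_rpow (p := 2*H) (by linarith))
  apply Filter.Eventually.of_forall
  intro v
  rw [Real.norm_eq_abs, abs_mul, abs_of_pos (Real.exp_pos _), one_mul]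
  exact mul_le_mul_of_nonneg_left (my_phi_le hp0.le hp1.le hs.le v) (Real.exp_pos _).le

lemma corrZ_abs_le_decay {H : ℝ} (hH : H ∈ Set.Ioo (0:ℝ) (1/2)) {s : ℝ} (hs : 0 < s) :
    |corrZ H s| ≤ (Real.Gamma (2*H+1))⁻¹ * ((1/2) *
      ((2*H) * (1-(2*H)) * (s/2) ^ (2*H-2) * Kc 2 1 +
        Real.exp (-(s/4)) * Kc (2*H) (1/2))) := by
  obtain ⟨hH1, hH2⟩ := hH
  have hp0 : (0:ℝ) < 2*H := by linarith
  have hp1 : (2*H:ℝ) < 1 := by linarith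
  have hΓ : 0 < Real.Gamma (2*H+1) := Real.Gamma_pos_of_pos (by linarith)
  rw [corrZ_eq ⟨hH1, hH2⟩ hs, abs_mul, abs_of_nonneg (inv_nonneg.2 hΓ.le), abs_mul,
    abs_of_nonneg (by norm_num : (0:ℝ) ≤ (1:ℝ)/2)]
  apply mul_le_mul_of_nonneg_left _ (inv_nonneg.2 hΓ.le)
  apply mul_le_mul_of_nonneg_left _ (by norm_num : (0:ℝ) ≤ (1:ℝ)/2)
  set p := 2*H with hp
  set a := s/2 with hadef
  have ha : 0 < a := by positivity
  have has : a ≤ s := by rw [hadef]; linarith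
  set G := fun v : ℝ => Real.exp (-|v|) * (|s + v| ^ p - s ^ p) with hGdef
  have hG_int : Integrable G := my_integrable_G hp0 hp1 hs.le
  have hA : MeasurableSet (Icc (-a) a) := measurableSet_Icc
  have hsplit := integral_add_compl hA hG_int
  set L := p * s ^ (p-1) with hLdef
  set M := p * (1-p) * a ^ (p-2) with hMdef
  have hM : 0 ≤ M := by
    rw [hMdef]
    have h2 : (0:ℝ) ≤ a ^ (p-2) := Real.rpow_nonneg ha.le _
    exact mul_nonneg (mul_nonneg hp0.le (by linarith)) h2
  -- the even integrable companion
  have h_ev : Integrable fun v : ℝ => Real.exp (-|v|) * v := by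
    apply Integrable.mono' (my_integrable_exp_abs_rpow (p := 1) (by norm_num))
    · exact ((Real.continuous_exp.comp continuous_abs.neg).mul continuous_id).aestronglyMeasurable
    · apply Filter.Eventually.of_forall
      intro v
      rw [Real.norm_eq_abs, abs_mul, abs_of_pos (Real.exp_pos _), Real.rpow_one]
  set G2 := fun v : ℝ => Real.exp (-|v|) * ((|s + v| ^ p - s ^ p) - L * v) with hG2def
  have hG2_int : Integrable G2 := by
    apply (hG_int.sub (h_ev.const_mul L)).congr
    apply Filter.Eventually.of_forall
    intro v
    simp only [hG2def, hGdef, Pi.sub_apply]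
    ring
  -- central bound
  have hcentral : |∫ v in Icc (-a) a, G v| ≤ M * Kc 2 1 := by
    have hdecomp : (∫ v in Icc (-a) a, G v)
        = (∫ v in Icc (-a) a, G2 v) + L * ∫ v in Icc (-a) a, Real.exp (-|v|) * v := by
      rw [← integral_const_mul, ← integral_add hG2_int.integrableOn
        ((h_ev.const_mul L).integrableOn)]
      apply setIntegral_congr_fun hA
      intro v _
      simp only [hG2def, hGdef]
      ring
    rw [hdecomp, my_odd_zero ha.le, mul_zero, add_zero]
    have hbound : ∀ v ∈ Icc (-a) a, ‖G2 v‖ ≤ M * (Real.exp (-(1*|v|)) * |v| ^ (2:ℝ)) := by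
      intro v hv
      obtain ⟨hv1, hv2⟩ := hv
      have hsv : a ≤ s + v := by linarith
      have habs : |s + v| = s + v := abs_of_pos (by linarith)
      have ht := my_taylor hp0 hp1 ha has hsv
      have hx : s + v - s = v := by ring
      rw [hx] at ht
      have hv2r : |v| ^ (2:ℝ) = v ^ 2 := by
        rw [show (2:ℝ) = ((2:ℕ):ℝ) by norm_num, Real.rpow_natCast, sq_abs]
      rw [Real.norm_eq_abs]
      simp only [hG2def]
      rw [abs_mul, abs_of_pos (Real.exp_pos _), habs, hLdef]
      calc Real.exp (-|v|) * |((s+v) ^ p - s ^ p) - p * s ^ (p-1) * v|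
          ≤ Real.exp (-|v|) * (M * v ^ 2) := by
            apply mul_le_mul_of_nonneg_left _ (Real.exp_pos _).le
            rw [hMdef]
            exact ht
        _ = M * (Real.exp (-(1*|v|)) * |v| ^ (2:ℝ)) := by
            rw [hv2r, one_mul]; ring
    calc |∫ v in Icc (-a) a, G2 v| ≤ ∫ v in Icc (-a) a, M * (Real.exp (-(1*|v|)) * |v| ^ (2:ℝ)) := by
          rw [← Real.norm_eq_abs]
          apply norm_integral_le_of_norm_le
            (((my_integrable_exp_rpow (by norm_num) one_pos).const_mul M).integrableOn)
          exact (ae_restrict_iff' hA).2 (Filter.Eventually.of_forall hbound)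
      _ ≤ ∫ v : ℝ, M * (Real.exp (-(1*|v|)) * |v| ^ (2:ℝ)) := by
          apply setIntegral_le_integral ((my_integrable_exp_rpow (by norm_num) one_pos).const_mul M)
          apply Filter.Eventually.of_forall
          intro v
          positivity
      _ = M * Kc 2 1 := by rw [integral_const_mul]; rfl
  -- tail bound
  have htail : |∫ v in (Icc (-a) a)ᶜ, G v| ≤ Real.exp (-(s/4)) * Kc p (1/2) := by
    have hbound : ∀ v ∈ (Icc (-a) a)ᶜ, ‖G v‖
        ≤ Real.exp (-(s/4)) * (Real.exp (-(1/2*|v|)) * |v| ^ p) := by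
      intro v hv
      have hva : a < |v| := by
        simp only [mem_compl_iff, mem_Icc, not_and_or, not_le] at hv
        cases' hv with h h
        · rw [abs_of_neg (by linarith)]; linarith
        · rw [abs_of_pos (by linarith)]; linarith
      have h1 : Real.exp (-|v|) ≤ Real.exp (-(s/4)) * Real.exp (-(1/2*|v|)) := by
        rw [← Real.exp_add]
        apply Real.exp_le_exp.2
        rw [hadef] at hva
        linarith
      rw [Real.norm_eq_abs]
      simp only [hGdef]
      rw [abs_mul, abs_of_pos (Real.exp_pos _)]
      calc Real.exp (-|v|) * abs (|s + v| ^ p - s ^ p)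
          ≤ (Real.exp (-(s/4)) * Real.exp (-(1/2*|v|))) * |v| ^ p := by
            apply mul_le_mul h1 (my_phi_le hp0.le hp1.le hs.le v) (abs_nonneg _)
            positivity
        _ = Real.exp (-(s/4)) * (Real.exp (-(1/2*|v|)) * |v| ^ p) := by ring
    calc |∫ v in (Icc (-a) a)ᶜ, G v|
        ≤ ∫ v in (Icc (-a) a)ᶜ, Real.exp (-(s/4)) * (Real.exp (-(1/2*|v|)) * |v| ^ p) := by
          rw [← Real.norm_eq_abs]
          apply norm_integral_le_of_norm_le
            (((my_integrable_exp_rpow (by linarith) (by norm_num)).const_mul _).integrableOn)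
          exact (ae_restrict_iff' hA.compl).2 (Filter.Eventually.of_forall hbound)
      _ ≤ ∫ v : ℝ, Real.exp (-(s/4)) * (Real.exp (-(1/2*|v|)) * |v| ^ p) := by
          apply setIntegral_le_integral
            ((my_integrable_exp_rpow (by linarith) (by norm_num)).const_mul _)
          apply Filter.Eventually.of_forall
          intro v
          positivity
      _ = Real.exp (-(s/4)) * Kc p (1/2) := by rw [integral_const_mul]; rfl
  calc |∫ v : ℝ, G v| = |(∫ v in Icc (-a) a, G v) + ∫ v in (Icc (-a) a)ᶜ, G v| := by
        rw [hsplit]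
      _ ≤ |∫ v in Icc (-a) a, G v| + |∫ v in (Icc (-a) a)ᶜ, G v| := abs_add_le _ _
      _ ≤ M * Kc 2 1 + Real.exp (-(s/4)) * Kc p (1/2) := add_le_add hcentral htail
      _ = p * (1-p) * a ^ (p-2) * Kc 2 1 + Real.exp (-(s/4)) * Kc p (1/2) := by
          rw [hMdef]

/-- For every `H ∈ (0,1/2)`, the fOU correlation function is absolutely
integrable on `(0,∞)`: `∫₀^∞ |𝒞_Z(s)| ds < ∞`. -/
theorem corrZ_integrable (H : ℝ) (hH : H ∈ Set.Ioo (0 : ℝ) (1/2)) :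
    IntegrableOn (corrZ H) (Set.Ioi 0) := by
  obtain ⟨hH1, hH2⟩ := hH
  have hp0 : (0:ℝ) < 2*H := by linarith
  have hp1 : (2*H:ℝ) < 1 := by linarith
  have hmeas : StronglyMeasurable (corrZ H) := by
    have hjoint : Continuous fun q : ℝ × ℝ => Real.exp (-|q.2|) * |q.1 + q.2| ^ (2*H) :=
      (Real.continuous_exp.comp continuous_snd.abs.neg).mul
        ((Real.continuous_rpow_const hp0.le).comp ((continuous_fst.add continuous_snd).abs))
    have hI : StronglyMeasurable fun s : ℝ => ∫ v : ℝ, Real.exp (-|v|) * |s + v| ^ (2*H) :=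
      hjoint.stronglyMeasurable.integral_prod_right'
    have h2 : StronglyMeasurable fun s : ℝ => s ^ (2*H) :=
      (Real.continuous_rpow_const hp0.le).stronglyMeasurable
    exact ((hI.const_mul (1/2 : ℝ)).sub h2).const_mul _
  rw [show Set.Ioi (0:ℝ) = Set.Ioc 0 1 ∪ Set.Ioi 1 from
    (Set.Ioc_union_Ioi_eq_Ioi zero_le_one).symm]
  apply IntegrableOn.union
  · apply Integrable.mono'
      (integrableOn_const (C := (Real.Gamma (2*H+1))⁻¹ * ((1/2) * Kc (2*H) 1)) measure_Ioc_lt_top.ne)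
      (hmeas.aestronglyMeasurable.restrict)
    refine (ae_restrict_iff' measurableSet_Ioc).2 (Filter.Eventually.of_forall fun s hs => ?_)
    rw [Real.norm_eq_abs]
    exact corrZ_abs_le_const ⟨hH1, hH2⟩ hs.1
  · set Γi := (Real.Gamma (2*H+1))⁻¹ with hΓdef
    set C1 := Γi * (1/2) * ((2*H) * (1-(2*H))) * ((2:ℝ) ^ (2*H-2))⁻¹ * Kc 2 1 with hC1
    set C2 := Γi * (1/2) * Kc (2*H) (1/2) with hC2
    have hg : IntegrableOn (fun s : ℝ => C1 * s ^ (2*H-2) + C2 * Real.exp (-(s/4))) (Set.Ioi 1) := by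
      apply Integrable.add
      · exact (integrableOn_Ioi_rpow_of_lt (by linarith) one_pos).const_mul C1
      · apply Integrable.const_mul
        apply (exp_neg_integrableOn_Ioi 1 (by norm_num : (0:ℝ) < 1/4)).congr_fun _ measurableSet_Ioi
        intro x _
        show Real.exp (-(1/4) * x) = Real.exp (-(x/4))
        rw [show -(1/4) * x = -(x/4) by ring]
    apply Integrable.mono' hg (hmeas.aestronglyMeasurable.restrict)
    refine (ae_restrict_iff' measurableSet_Ioi).2 (Filter.Eventually.of_forall fun s hs => ?_)
    have hs0 : (0:ℝ) < s := lt_trans one_pos hs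
    rw [Real.norm_eq_abs]
    calc |corrZ H s| ≤ Γi * ((1/2) *
        ((2*H) * (1-(2*H)) * (s/2) ^ (2*H-2) * Kc 2 1 +
          Real.exp (-(s/4)) * Kc (2*H) (1/2))) := corrZ_abs_le_decay ⟨hH1, hH2⟩ hs0
      _ = C1 * s ^ (2*H-2) + C2 * Real.exp (-(s/4)) := by
          rw [Real.div_rpow hs0.le (by norm_num : (0:ℝ) ≤ 2), hC1, hC2]
          field_simp
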